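/- For each positive integer n, the statement Φ_n holds if and only if the following holds: for every system S ⊆ E_n that has only finitely many integer solutions, every integer solution (x_1,...,x_n) of S satisfies |x_1| ≤ 2^(2^(n-1)), ..., |x_n| ≤ 2^(2^(n-1)). -/

import Mathlib

/-- A system of equations `S ⊆ E_n`: a set of equations of the forms
`x_i = 1`, `x_i + x_j = x_k`, `x_i * x_j = x_k` with `i, j, k ∈ {1, …, n}`. -/
structure EqnSystem (n : ℕ) where
  ones : Set (Fin n)
  adds : Set (Fin n × Fin n × Fin n)
  muls : Set (Fin n × Fin n × Fin n)

/-- A tuple `x` solves the system `S` when it satisfies every equation of `S`. -/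
def EqnSystem.Solves {n : ℕ} {R : Type*} [Add R] [Mul R] [One R]
    (S : EqnSystem n) (x : Fin n → R) : Prop :=
  (∀ i ∈ S.ones, x i = 1) ∧
  (∀ t ∈ S.adds, x t.1 + x t.2.1 = x t.2.2) ∧
  (∀ t ∈ S.muls, x t.1 * x t.2.1 = x t.2.2)

/-- The statement `Φ_n`: for all integers `x_1, …, x_n` there exist integers
`y_1, …, y_n` such that (i) if `2^(2^(n-1)) < |x_1|` then `|x_1| < |y_i|` for some `i`;
(ii) `x_i + x_j = x_k` implies `y_i + y_j = y_k`; (iii) `x_i · x_j = x_k` implies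
`y_i · y_j = y_k`. (The first coordinate is the one of index `0`.) -/
def Phi (n : ℕ) : Prop :=
  ∀ x : Fin n → ℤ, ∃ y : Fin n → ℤ,
    (∀ i : Fin n, (i : ℕ) = 0 →
      (2 : ℤ) ^ 2 ^ (n - 1) < |x i| → ∃ j : Fin n, |x i| < |y j|) ∧
    (∀ i j k : Fin n, x i + x j = x k → y i + y j = y k) ∧
    (∀ i j k : Fin n, x i * x j = x k → y i * y j = y k)

lemma phi_step {n : ℕ} (hn : 0 < n) (hΦ : Phi n) (S : EqnSystem n)
    (z : Fin n → ℤ) (hz : S.Solves z) (k : Fin n)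
    (hk : (2 : ℤ) ^ 2 ^ (n - 1) < |z k|) :
    ∃ y : Fin n → ℤ, S.Solves y ∧ ∃ j : Fin n, |z k| < |y j| := by
  set σ := Equiv.swap k ⟨0, hn⟩ with hσ
  obtain ⟨y', h1, h2, h3⟩ := hΦ (z ∘ σ)
  have hσ0 : σ ⟨0, hn⟩ = k := Equiv.swap_apply_right _ _
  have hz0 : (z ∘ σ) ⟨0, hn⟩ = z k := by simp [hσ0]
  have hkb : (2 : ℤ) ^ 2 ^ (n - 1) < |(z ∘ σ) ⟨0, hn⟩| := by rw [hz0]; exact hk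
  obtain ⟨j0, hj0⟩ := h1 ⟨0, hn⟩ rfl hkb
  rw [hz0] at hj0
  set y : Fin n → ℤ := y' ∘ σ.symm with hy
  have hyval : ∀ a, y a = y' (σ.symm a) := fun a => rfl
  have hrel : ∀ a : Fin n, z a = (z ∘ σ) (σ.symm a) := by
    intro a; simp
  have hadd : ∀ a b c : Fin n, z a + z b = z c → y a + y b = y c := by
    intro a b c h
    have := h2 (σ.symm a) (σ.symm b) (σ.symm c)
    simp only [Function.comp_apply, Equiv.apply_symm_apply] at this
    exact this h
  have hmul : ∀ a b c : Fin n, z a * z b = z c → y a * y b = y c := by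
    intro a b c h
    have := h3 (σ.symm a) (σ.symm b) (σ.symm c)
    simp only [Function.comp_apply, Equiv.apply_symm_apply] at this
    exact this h
  have hbig : |z k| < |y (σ j0)| := by
    rw [hyval, Equiv.symm_apply_apply]; exact hj0
  have hne : y (σ j0) ≠ 0 := by
    intro h0
    rw [h0] at hbig
    simp only [abs_zero] at hbig
    exact absurd hbig (not_lt.mpr (abs_nonneg _))
  refine ⟨y, ⟨?_, ?_, ?_⟩, σ j0, hbig⟩
  · intro i hi
    have hzi : z i = 1 := hz.1 i hi
    have hm : z i * z (σ j0) = z (σ j0) := by rw [hzi, one_mul]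
    have := hmul i (σ j0) (σ j0) hm
    exact mul_right_cancel₀ hne (by rw [this, one_mul])
  · intro t ht; exact hadd _ _ _ (hz.2.1 t ht)
  · intro t ht; exact hmul _ _ _ (hz.2.2 t ht)

/-- `Φ_n` holds if and only if every system `S ⊆ E_n` with only finitely many integer
solutions has all its integer solutions in the box `[-2^(2^(n-1)), 2^(2^(n-1))]^n`. -/
theorem phi_iff_finite_solution_bound (n : ℕ) (hn : 0 < n) :
    Phi n ↔
      ∀ S : EqnSystem n, {x : Fin n → ℤ | S.Solves x}.Finite →
        ∀ x : Fin n → ℤ, S.Solves x → ∀ i : Fin n, |x i| ≤ (2 : ℤ) ^ 2 ^ (n - 1) := by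
  constructor
  · -- Φ n → bound
    intro hΦ S hfin x hx i
    by_contra hbad
    push_neg at hbad
    set T := hfin.toFinset with hT
    have hxT : x ∈ T := by simp [hT, Set.Finite.mem_toFinset]; exact hx
    set f : (Fin n → ℤ) → ℕ := fun z => Finset.univ.sup (fun k => (z k).natAbs) with hf
    obtain ⟨z, hzT, hzsup⟩ := Finset.exists_mem_eq_sup T ⟨x, hxT⟩ f
    obtain ⟨k, -, hksup⟩ := Finset.exists_mem_eq_sup (Finset.univ : Finset (Fin n))
      ⟨⟨0, hn⟩, Finset.mem_univ _⟩ (fun k => (z k).natAbs)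
    have hz : S.Solves z := by
      rw [hT, Set.Finite.mem_toFinset] at hzT; exact hzT
    have hle : ∀ w : Fin n → ℤ, S.Solves w → ∀ j : Fin n, |w j| ≤ |z k| := by
      intro w hw j
      have hwT : w ∈ T := by rw [hT, Set.Finite.mem_toFinset]; exact hw
      have h1 : (w j).natAbs ≤ f w :=
        Finset.le_sup (f := fun k => (w k).natAbs) (Finset.mem_univ j)
      have h2 : f w ≤ T.sup f := Finset.le_sup hwT
      have : (w j).natAbs ≤ (z k).natAbs := by
        rw [← hksup]
        exact le_trans (h1.trans h2) (le_of_eq hzsup)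
      rw [Int.abs_eq_natAbs, Int.abs_eq_natAbs]
      exact_mod_cast this
    have hkbig : (2 : ℤ) ^ 2 ^ (n - 1) < |z k| := lt_of_lt_of_le hbad (hle x hx i)
    obtain ⟨y, hy, j, hj⟩ := phi_step hn hΦ S z hz k hkbig
    exact absurd hj (not_lt.mpr (hle y hy j))
  · -- bound → Φ n
    intro hB x
    set S : EqnSystem n :=
      { ones := ∅
        adds := {t | x t.1 + x t.2.1 = x t.2.2}
        muls := {t | x t.1 * x t.2.1 = x t.2.2} } with hS
    have hxS : S.Solves x := ⟨fun i hi => absurd hi (Set.notMem_empty i),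
      fun t ht => ht, fun t ht => ht⟩
    by_cases hfin : {y : Fin n → ℤ | S.Solves y}.Finite
    · refine ⟨x, ?_, fun i j k h => h, fun i j k h => h⟩
      intro i _ hbig
      exact absurd hbig (not_lt.mpr (hB S hfin x hxS i))
    · -- infinitely many solutions: find one with a large coordinate
      set C : ℤ := |x ⟨0, hn⟩| with hC
      have : ∃ y : Fin n → ℤ, S.Solves y ∧ ∃ j : Fin n, C < |y j| := by
        by_contra hcon
        push_neg at hcon
        apply hfin
        have hsub : {y : Fin n → ℤ | S.Solves y} ⊆
            Set.pi Set.univ (fun _ : Fin n => Set.Icc (-C) C) := by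
          intro y hy
          intro j _
          have := hcon y hy j
          exact abs_le.mp this
        exact Set.Finite.subset (Set.Finite.pi (fun _ => Set.finite_Icc _ _)) hsub
      obtain ⟨y, hy, j, hj⟩ := this
      refine ⟨y, ?_, ?_, ?_⟩
      · intro i hi0 _
        have : i = ⟨0, hn⟩ := Fin.ext hi0
        exact ⟨j, by rw [this, ← hC]; exact hj⟩
      · intro a b c h; exact hy.2.1 (a, b, c) h
      · intro a b c h; exact hy.2.2 (a, b, c) h
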